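/- Let $n \in \mathbb{N}$ and let $\mathbf{W} \in \mathbb{R}^{n \times n}$ be symmetric with nonnegative entries. Let $x \in \{+1, -1\}^n$ define the partition $S_A = \{i : x_i = 1\}$ and $S_B = \{i : x_i = -1\}$; let $d_i = \sum_{j=1}^n W_{ij}$, $\mathbf{D} = \mathrm{diag}(d_1,\dots,d_n)$, and $\mathbf{L} = \mathbf{D} - \mathbf{W}$. Define $\mathrm{vol}(S_A) = \sum_{i \in S_A} d_i$, $\mathrm{vol}(S_B) = \sum_{i \in S_B} d_i$, and $\mathrm{cut}(S_A, S_B) = \sum_{i \in S_A}\sum_{j \in S_B} W_{ij}$, and assume $\mathrm{vol}(S_A) > 0$ and $\mathrm{vol}(S_B) > 0$. Set $b = \mathrm{vol}(S_A)/\mathrm{vol}(S_B)$ and define $y \in \mathbb{R}^n$ by $y_i = 1$ if $i \in S_A$ and $y_i = -b$ if $i \in S_B$. Then $y^{\top}\mathbf{D}y > 0$ and $\frac{y^{\top}\mathbf{L}y}{y^{\top}\mathbf{D}y} = \frac{\mathrm{cut}(S_A,S_B)}{\mathrm{vol}(S_A)} + \frac{\mathrm{cut}(S_A,S_B)}{\mathrm{vol}(S_B)}$,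 i.e.\ the Rayleigh quotient of $y$ equals the normalized cut $\mathrm{Ncut}(S_A, S_B)$. -/

import Mathlib

open Matrix BigOperators Finset

/-- Shi–Malik identity: for the indicator-based vector `y` (with `yᵢ = 1` on `S_A` and
`yᵢ = -b` on `S_B`, `b = vol(S_A)/vol(S_B)`), the Rayleigh quotient `yᵀLy / yᵀDy`
equals the normalized cut `cut/vol(S_A) + cut/vol(S_B)`, and `yᵀDy > 0`. -/
theorem ncut_rayleigh_identity
    (n : ℕ) (W : Matrix (Fin n) (Fin n) ℝ)
    (hsymm : W.IsSymm) (hnonneg : ∀ i j, 0 ≤ W i j)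
    (x : Fin n → ℝ) (hx : ∀ i, x i = 1 ∨ x i = -1)
    (d : Fin n → ℝ) (hd : d = fun i => ∑ j : Fin n, W i j)
    (L : Matrix (Fin n) (Fin n) ℝ) (hL : L = diagonal d - W)
    (volA volB cut : ℝ)
    (hvolA : volA = ∑ i ∈ univ.filter (fun i => x i = 1), d i)
    (hvolB : volB = ∑ i ∈ univ.filter (fun i => x i = -1), d i)
    (hcut : cut = ∑ i ∈ univ.filter (fun i => x i = 1),
        ∑ j ∈ univ.filter (fun j => x j = -1), W i j)
    (hvolApos : 0 < volA) (hvolBpos : 0 < volB)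
    (b : ℝ) (hb : b = volA / volB)
    (y : Fin n → ℝ) (hy : y = fun i => if x i = 1 then (1:ℝ) else -b) :
    0 < y ⬝ᵥ (diagonal d).mulVec y ∧
      (y ⬝ᵥ L.mulVec y) / (y ⬝ᵥ (diagonal d).mulVec y) = cut / volA + cut / volB := by
  classical
  set A := univ.filter (fun i => x i = 1) with hAdef
  set B := univ.filter (fun i => x i = -1) with hBdef
  have hnot : (univ.filter fun i => ¬ x i = 1) = B := by
    rw [hBdef]
    apply Finset.filter_congr
    intro i _
    rcases hx i with h | h <;> simp [h] <;> norm_num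
  have hsplit : ∀ f : Fin n → ℝ, ∑ i, f i = ∑ i ∈ A, f i + ∑ i ∈ B, f i := by
    intro f
    rw [← hnot, Finset.sum_filter_add_sum_filter_not]
  have hyA : ∀ i ∈ A, y i = 1 := by
    intro i hi
    rw [hAdef] at hi
    simp only [mem_filter] at hi
    simp [hy, hi.2]
  have hyB : ∀ i ∈ B, y i = -b := by
    intro i hi
    rw [hBdef] at hi
    simp only [mem_filter] at hi
    rw [hy]
    simp only
    rw [if_neg]
    norm_num [hi.2]
  have hWsym : ∀ i j, W i j = W j i := fun i j => by
    have := congrFun (congrFun hsymm j) i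
    simpa using this
  set cAA := ∑ i ∈ A, ∑ j ∈ A, W i j with hcAA
  set cBB := ∑ i ∈ B, ∑ j ∈ B, W i j with hcBB
  have hcutAB : (∑ i ∈ A, ∑ j ∈ B, W i j) = cut := hcut.symm
  have hcutBA : (∑ i ∈ B, ∑ j ∈ A, W i j) = cut := by
    rw [hcut]
    refine Finset.sum_comm.trans ?_
    exact Finset.sum_congr rfl fun j _ => Finset.sum_congr rfl fun i _ => hWsym _ _
  have hvA : volA = cAA + cut := by
    rw [hvolA, hcAA, ← hcutAB, ← Finset.sum_add_distrib]
    refine Finset.sum_congr rfl fun i _ => ?_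
    rw [hd]
    exact hsplit (fun j => W i j)
  have hvB : volB = cut + cBB := by
    rw [hvolB, hcBB, ← hcutBA, ← Finset.sum_add_distrib]
    refine Finset.sum_congr rfl fun i _ => ?_
    rw [hd]
    exact hsplit (fun j => W i j)
  have hDy : y ⬝ᵥ (diagonal d).mulVec y = volA + b ^ 2 * volB := by
    have e1 : y ⬝ᵥ (diagonal d).mulVec y = ∑ i, y i * (d i * y i) := by
      simp [dotProduct, mulVec_diagonal]
    rw [e1, hsplit, hvolA, hvolB, Finset.mul_sum]
    congr 1
    · exact Finset.sum_congr rfl fun i hi => by rw [hyA i hi]; ring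
    · exact Finset.sum_congr rfl fun i hi => by rw [hyB i hi]; ring
  have hWy : y ⬝ᵥ W.mulVec y = cAA - b * cut - b * cut + b ^ 2 * cBB := by
    have e1 : y ⬝ᵥ W.mulVec y = ∑ i, ∑ j, y i * (W i j * y j) := by
      simp [dotProduct, mulVec, Finset.mul_sum]
    rw [e1, hsplit (fun i => ∑ j, y i * (W i j * y j))]
    have eA : ∑ i ∈ A, ∑ j, y i * (W i j * y j)
        = cAA + (-b) * (∑ i ∈ A, ∑ j ∈ B, W i j) := by
      rw [Finset.mul_sum, ← Finset.sum_add_distrib]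
      refine Finset.sum_congr rfl fun i hi => ?_
      rw [hsplit (fun j => y i * (W i j * y j))]
      congr 1
      · exact Finset.sum_congr rfl fun j hj => by rw [hyA i hi, hyA j hj]; ring
      · rw [Finset.mul_sum]
        exact Finset.sum_congr rfl fun j hj => by rw [hyA i hi, hyB j hj]; ring
    have eB : ∑ i ∈ B, ∑ j, y i * (W i j * y j)
        = (-b) * (∑ i ∈ B, ∑ j ∈ A, W i j) + b ^ 2 * cBB := by
      rw [Finset.mul_sum, Finset.mul_sum, ← Finset.sum_add_distrib]
      refine Finset.sum_congr rfl fun i hi => ?_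
      rw [hsplit (fun j => y i * (W i j * y j)), Finset.mul_sum, Finset.mul_sum]
      congr 1
      · exact Finset.sum_congr rfl fun j hj => by rw [hyB i hi, hyA j hj]; ring
      · exact Finset.sum_congr rfl fun j hj => by rw [hyB i hi, hyB j hj]; ring
    rw [eA, eB, hcutAB, hcutBA]
    ring
  have hLy : y ⬝ᵥ L.mulVec y = cut * (1 + b) ^ 2 := by
    rw [hL, sub_mulVec, dotProduct_sub, hDy, hWy, hvA, hvB]
    ring
  have hDypos : 0 < y ⬝ᵥ (diagonal d).mulVec y := by
    rw [hDy]
    have h1 : 0 ≤ b ^ 2 * volB := mul_nonneg (sq_nonneg b) hvolBpos.le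
    linarith
  refine ⟨hDypos, ?_⟩
  rw [hLy, hDy, hb]
  field_simp
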